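/- Let (Y_{i,m})_{i,m≥1} be a doubly indexed family of integrable centered random vectors in ℝ^d (E[Y_{i,m}] = 0 for all i, m) on a probability space (Ω, F, P), and set Ȳ_{k,m} = (1/k) Σ_{i=1}^k Y_{i,m}. Assume there is κ > 0 such that sup_k sup_m k·E[|Ȳ_{k,m}|²] ≤ κ and sup_k sup_m E[|Y_{k,m}|²] ≤ κ. Define the block maxima Z_{n,m} = max_{n² ≤ k < (n+1)²} |Ȳ_{k,m}|. Then there is a constant C > 0, depending only on κ, such that for all n ≥ 1 and all m, E[Z_{n,m}²] ≤ C/n². -/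

import Mathlib

set_option maxHeartbeats 1000000

open MeasureTheory ProbabilityTheory Filter

lemma real_biSup_le {s : Finset ℕ} {f : ℕ → ℝ} {c : ℝ} (hc : 0 ≤ c)
    (h : ∀ k ∈ s, f k ≤ c) : (⨆ k ∈ s, f k) ≤ c :=
  Real.iSup_le (fun k => Real.iSup_le (fun hk => h k hk) hc) hc

lemma le_real_biSup {s : Finset ℕ} {f : ℕ → ℝ} (hf : ∀ k, 0 ≤ f k) {k : ℕ}
    (hk : k ∈ s) : f k ≤ ⨆ j ∈ s, f j := by
  have hb : BddAbove (Set.range fun j => ⨆ _ : j ∈ s, f j) := by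
    refine ⟨(s.sup' ⟨k, hk⟩ f) ⊔ 0, ?_⟩
    rintro x ⟨j, rfl⟩
    show (⨆ _ : j ∈ s, f j) ≤ _
    by_cases hj : j ∈ s
    · rw [ciSup_pos hj]
      exact le_sup_of_le_left (Finset.le_sup' f hj)
    · have : IsEmpty (j ∈ s) := ⟨hj⟩
      rw [Real.iSup_of_isEmpty]
      exact le_sup_right
  refine le_ciSup_of_le hb k ?_
  rw [ciSup_pos hk]

/-- Block-maxima moment bound from the proof of Proposition `slln2`: for
centered random vectors with uniformly bounded variances of the averages and of
the individual terms, the maxima `Z_{n,m}` of `|Ȳ_{k,m}|` over the blocks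
`n² ≤ k < (n+1)²` satisfy `E[Z_{n,m}²] ≤ C/n²` for a constant `C` depending only
on `κ`. -/
theorem stmt_12 {Ω : Type*} [MeasureSpace Ω] [IsProbabilityMeasure (ℙ : Measure Ω)]
    {d : ℕ}
    (Y : ℕ → ℕ → Ω → EuclideanSpace ℝ (Fin d))
    (hint : ∀ i m, Integrable (Y i m) ℙ)
    (hmean : ∀ i m, ∫ ω, Y i m ω ∂ℙ = 0)
    (Ybar : ℕ → ℕ → Ω → EuclideanSpace ℝ (Fin d))
    (hYbar : ∀ k m ω, Ybar k m ω = (k : ℝ)⁻¹ • ∑ i ∈ Finset.range k, Y i m ω)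
    (κ : ℝ) (hκ : 0 < κ)
    (h1 : ∀ (k m : ℕ), (k : ℝ) * ∫ ω, ‖Ybar k m ω‖ ^ 2 ∂ℙ ≤ κ)
    (h2 : ∀ (k m : ℕ), (∫ ω, ‖Y k m ω‖ ^ 2 ∂ℙ) ≤ κ)
    (Z : ℕ → ℕ → Ω → ℝ)
    (hZ : ∀ n m ω, Z n m ω = ⨆ k ∈ Finset.Ico (n ^ 2) ((n + 1) ^ 2), ‖Ybar k m ω‖) :
    ∃ C > (0 : ℝ), ∀ (n : ℕ), 1 ≤ n → ∀ (m : ℕ),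
      (∫ ω, (Z n m ω) ^ 2 ∂ℙ) ≤ C / (n : ℝ) ^ 2 := by
  refine ⟨10 * κ, by positivity, fun n hn m => ?_⟩
  have hn0 : (0:ℝ) < (n:ℝ) := by exact_mod_cast Nat.lt_of_lt_of_le Nat.zero_lt_one hn
  set s : Finset ℕ := Finset.Ico (n ^ 2) ((n + 1) ^ 2) with hs
  set t : Finset ℕ := Finset.Ico (n ^ 2) ((n + 1) ^ 2 - 1) with ht
  have hn2s : n ^ 2 ∈ s := by
    rw [hs, Finset.mem_Ico]
    exact ⟨le_refl _, Nat.pow_lt_pow_left (Nat.lt_succ_self n) (by norm_num)⟩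
  have hcardt : (t.card : ℝ) = 2 * n := by
    rw [ht, Nat.card_Ico]
    have : (n + 1) ^ 2 - 1 - n ^ 2 = 2 * n := by ring_nf; omega
    rw [this]; push_cast; ring
  set A : Ω → ℝ := fun ω => ‖Ybar (n ^ 2) m ω‖ with hA
  set S : Ω → ℝ := fun ω => ∑ i ∈ t, ‖Y i m ω‖ with hS
  set c : ℝ := ((n:ℝ) ^ 2)⁻¹ with hc
  have hcpos : 0 < c := by rw [hc]; positivity
  have hSnn : ∀ ω, 0 ≤ S ω := fun ω => Finset.sum_nonneg fun i _ => norm_nonneg _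
  -- key pointwise bound
  have hkey : ∀ ω, ∀ k ∈ s, ‖Ybar k m ω‖ ≤ A ω + c * S ω := by
    intro ω k hk
    rw [hs, Finset.mem_Ico] at hk
    obtain ⟨hk1, hk2⟩ := hk
    have hn2pos : 0 < n ^ 2 := by positivity
    have hkpos : 0 < k := lt_of_lt_of_le hn2pos hk1
    have hkR : (0:ℝ) < (k:ℝ) := by exact_mod_cast hkpos
    have hsplit : ∑ i ∈ Finset.range k, Y i m ω
        = (∑ i ∈ Finset.range (n ^ 2), Y i m ω) + ∑ i ∈ Finset.Ico (n ^ 2) k, Y i m ω := by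
      simp only [Finset.range_eq_Ico]
      exact (Finset.sum_Ico_consecutive _ (Nat.zero_le _) hk1).symm
    have hu : ∑ i ∈ Finset.range (n ^ 2), Y i m ω = ((n:ℝ) ^ 2) • Ybar (n ^ 2) m ω := by
      rw [hYbar, smul_smul]
      push_cast
      rw [mul_inv_cancel₀ (by positivity), one_smul]
    have hsub : Finset.Ico (n ^ 2) k ⊆ t := by
      rw [ht]; exact Finset.Ico_subset_Ico le_rfl (by omega)
    have hv : ‖∑ i ∈ Finset.Ico (n ^ 2) k, Y i m ω‖ ≤ S ω := by
      refine (norm_sum_le _ _).trans ?_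
      rw [hS]
      exact Finset.sum_le_sum_of_subset_of_nonneg hsub fun i _ _ => norm_nonneg _
    have hinv : ((k:ℝ))⁻¹ ≤ c := by
      rw [hc]
      apply inv_anti₀ (by positivity)
      exact_mod_cast hk1
    have h1' : ‖(k:ℝ)⁻¹ • (((n:ℝ) ^ 2) • Ybar (n ^ 2) m ω)‖ ≤ A ω := by
      rw [norm_smul, norm_smul, Real.norm_eq_abs, Real.norm_eq_abs, abs_of_pos (by positivity),
        abs_of_pos (by positivity : (0:ℝ) < (n:ℝ) ^ 2)]
      have hle1 : (k:ℝ)⁻¹ * (n:ℝ) ^ 2 ≤ 1 := by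
        rw [inv_mul_le_iff₀ hkR, mul_one]
        exact_mod_cast hk1
      calc (k:ℝ)⁻¹ * ((n:ℝ) ^ 2 * ‖Ybar (n ^ 2) m ω‖)
          = ((k:ℝ)⁻¹ * (n:ℝ) ^ 2) * A ω := by rw [hA]; ring
        _ ≤ 1 * A ω := mul_le_mul_of_nonneg_right hle1 (norm_nonneg _)
        _ = A ω := one_mul _
    have h2' : ‖(k:ℝ)⁻¹ • ∑ i ∈ Finset.Ico (n ^ 2) k, Y i m ω‖ ≤ c * S ω := by
      rw [norm_smul, Real.norm_eq_abs, abs_of_pos (by positivity)]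
      exact mul_le_mul hinv hv (norm_nonneg _) (le_of_lt hcpos)
    rw [hYbar, hsplit, hu, smul_add]
    exact (norm_add_le _ _).trans (add_le_add h1' h2')
  -- Z bounds
  have hZnn : ∀ ω, 0 ≤ Z n m ω := by
    intro ω
    rw [hZ]
    exact le_trans (norm_nonneg (Ybar (n ^ 2) m ω))
      (le_real_biSup (f := fun j => ‖Ybar j m ω‖) (fun j => norm_nonneg _) hn2s)
  have hZle : ∀ ω, Z n m ω ≤ A ω + c * S ω := by
    intro ω
    rw [hZ]
    exact real_biSup_le (by positivity) (fun k hk => hkey ω k hk)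
  have hZge : ∀ k ∈ s, ∀ ω, ‖Ybar k m ω‖ ≤ Z n m ω := by
    intro k hk ω
    rw [hZ]
    exact le_real_biSup (f := fun j => ‖Ybar j m ω‖) (fun j => norm_nonneg _) hk
  -- measurability
  have hYbarAE : ∀ k, AEStronglyMeasurable (Ybar k m) ℙ := by
    intro k
    have : Ybar k m = fun ω => (k : ℝ)⁻¹ • ∑ i ∈ Finset.range k, Y i m ω :=
      funext (hYbar k m)
    rw [this]
    exact (Finset.aestronglyMeasurable_fun_sum _ fun i _ =>
      (hint i m).aestronglyMeasurable).const_smul ((k : ℝ)⁻¹)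
  have hYbarSqAE : ∀ k, AEStronglyMeasurable (fun ω => ‖Ybar k m ω‖ ^ 2) ℙ :=
    fun k => (hYbarAE k).norm.pow 2
  by_cases hZint : Integrable (fun ω => Z n m ω ^ 2) ℙ
  swap
  · rw [integral_undef hZint]
    positivity
  -- integrability of the block averages
  have hYbarSqInt : ∀ k ∈ s, Integrable (fun ω => ‖Ybar k m ω‖ ^ 2) ℙ := by
    intro k hk
    refine hZint.mono' (hYbarSqAE k) (ae_of_all _ fun ω => ?_)
    rw [Real.norm_eq_abs, abs_of_nonneg (by positivity)]
    exact pow_le_pow_left₀ (norm_nonneg _) (hZge k hk ω) 2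
  -- Y in terms of Ybar
  have hYeq : ∀ i ∈ t, ∀ ω,
      Y i m ω = ((i:ℝ) + 1) • Ybar (i + 1) m ω - (i:ℝ) • Ybar i m ω := by
    intro i hi ω
    rw [ht, Finset.mem_Ico] at hi
    have hipos : 0 < i := lt_of_lt_of_le (by positivity) hi.1
    have e1 : ((i:ℝ) + 1) • Ybar (i + 1) m ω = ∑ j ∈ Finset.range (i + 1), Y j m ω := by
      rw [hYbar, smul_smul]
      push_cast
      rw [mul_inv_cancel₀ (by positivity), one_smul]
    have e2 : (i:ℝ) • Ybar i m ω = ∑ j ∈ Finset.range i, Y j m ω := by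
      rw [hYbar, smul_smul]
      have : (0:ℝ) < (i:ℝ) := by exact_mod_cast hipos
      rw [mul_inv_cancel₀ (ne_of_gt this), one_smul]
    rw [e1, e2, Finset.sum_range_succ]
    abel
  have hts : t ⊆ s := by
    rw [ht, hs]; exact Finset.Ico_subset_Ico le_rfl (Nat.sub_le _ _)
  -- integrability of individual squared norms
  have hYSqInt : ∀ i ∈ t, Integrable (fun ω => ‖Y i m ω‖ ^ 2) ℙ := by
    intro i hi
    have his : i ∈ s := hts hi
    have hi1s : i + 1 ∈ s := by
      rw [ht, Finset.mem_Ico] at hi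
      rw [hs, Finset.mem_Ico]
      omega
    refine ((((hYbarSqInt (i+1) hi1s).const_mul (2 * ((i:ℝ) + 1) ^ 2)).add
      ((hYbarSqInt i his).const_mul (2 * (i:ℝ) ^ 2))).mono'
      ((hint i m).aestronglyMeasurable.norm.pow 2) (ae_of_all _ fun ω => ?_))
    rw [Real.norm_eq_abs, abs_of_nonneg (by positivity), hYeq i hi ω]
    have hb : ‖((i:ℝ) + 1) • Ybar (i + 1) m ω - (i:ℝ) • Ybar i m ω‖
        ≤ ((i:ℝ) + 1) * ‖Ybar (i + 1) m ω‖ + (i:ℝ) * ‖Ybar i m ω‖ := by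
      refine (norm_sub_le _ _).trans ?_
      rw [norm_smul, norm_smul, Real.norm_eq_abs, Real.norm_eq_abs,
        abs_of_nonneg (by positivity), abs_of_nonneg (by positivity)]
    simp only [Pi.add_apply]
    nlinarith [hb, norm_nonneg (((i:ℝ) + 1) • Ybar (i + 1) m ω - (i:ℝ) • Ybar i m ω),
      sq_nonneg (((i:ℝ) + 1) * ‖Ybar (i + 1) m ω‖ - (i:ℝ) * ‖Ybar i m ω‖),
      mul_nonneg (sub_nonneg.2 hb)
        (by positivity : (0:ℝ) ≤ ((i:ℝ) + 1) * ‖Ybar (i + 1) m ω‖ + (i:ℝ) * ‖Ybar i m ω‖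
          + ‖((i:ℝ) + 1) • Ybar (i + 1) m ω - (i:ℝ) • Ybar i m ω‖)]
  -- sums of squares
  have hsumInt : Integrable (fun ω => ∑ i ∈ t, ‖Y i m ω‖ ^ 2) ℙ :=
    integrable_finset_sum t hYSqInt
  have hCS : ∀ ω, S ω ^ 2 ≤ (t.card : ℝ) * ∑ i ∈ t, ‖Y i m ω‖ ^ 2 := by
    intro ω
    rw [hS]
    exact sq_sum_le_card_mul_sum_sq
  have hSAE : AEStronglyMeasurable (fun ω => S ω ^ 2) ℙ := by
    rw [hS]
    exact (Finset.aestronglyMeasurable_fun_sum t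
      (fun i _ => (hint i m).aestronglyMeasurable.norm)).pow 2
  have hSsqInt : Integrable (fun ω => S ω ^ 2) ℙ := by
    refine (hsumInt.const_mul ((t.card : ℝ))).mono' hSAE (ae_of_all _ fun ω => ?_)
    rw [Real.norm_eq_abs, abs_of_nonneg (by positivity)]
    exact hCS ω
  have hA2Int : Integrable (fun ω => A ω ^ 2) ℙ := hYbarSqInt _ hn2s
  have hdomInt : Integrable (fun ω => 2 * A ω ^ 2 + 2 * c ^ 2 * S ω ^ 2) ℙ :=
    (hA2Int.const_mul 2).add (hSsqInt.const_mul (2 * c ^ 2))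
  have hmain : ∫ ω, Z n m ω ^ 2 ≤ ∫ ω, (2 * A ω ^ 2 + 2 * c ^ 2 * S ω ^ 2) := by
    refine integral_mono_of_nonneg (ae_of_all _ fun ω => sq_nonneg _) hdomInt
      (ae_of_all _ fun ω => ?_)
    show Z n m ω ^ 2 ≤ 2 * A ω ^ 2 + 2 * c ^ 2 * S ω ^ 2
    have hAnn : 0 ≤ A ω := norm_nonneg _
    have hcS : 0 ≤ c * S ω := mul_nonneg hcpos.le (hSnn ω)
    nlinarith [hZle ω, hZnn ω, sq_nonneg (A ω - c * S ω),
      mul_nonneg (sub_nonneg.2 (hZle ω)) (add_nonneg (add_nonneg hAnn hcS) (hZnn ω))]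
  have heq : ∫ ω, (2 * A ω ^ 2 + 2 * c ^ 2 * S ω ^ 2)
      = 2 * (∫ ω, A ω ^ 2) + 2 * c ^ 2 * ∫ ω, S ω ^ 2 := by
    rw [integral_add (hA2Int.const_mul 2) (hSsqInt.const_mul (2 * c ^ 2)),
      integral_const_mul, integral_const_mul]
  have hAbound : ∫ ω, A ω ^ 2 ≤ κ / (n:ℝ) ^ 2 := by
    have h := h1 (n ^ 2) m
    push_cast at h
    rw [le_div_iff₀ (by positivity : (0:ℝ) < (n:ℝ) ^ 2)]
    have hAint : (∫ ω, A ω ^ 2) = ∫ ω, ‖Ybar (n ^ 2) m ω‖ ^ 2 := rfl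
    rw [hAint]
    linarith [h]
  have hSbound : ∫ ω, S ω ^ 2 ≤ 4 * (n:ℝ) ^ 2 * κ := by
    calc ∫ ω, S ω ^ 2 ≤ ∫ ω, (t.card : ℝ) * ∑ i ∈ t, ‖Y i m ω‖ ^ 2 :=
          integral_mono hSsqInt (hsumInt.const_mul _) fun ω => hCS ω
      _ = (t.card : ℝ) * ∑ i ∈ t, ∫ ω, ‖Y i m ω‖ ^ 2 := by
          rw [integral_const_mul, integral_finset_sum t hYSqInt]
      _ ≤ (t.card : ℝ) * ∑ i ∈ t, κ := by
          refine mul_le_mul_of_nonneg_left ?_ (Nat.cast_nonneg _)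
          exact Finset.sum_le_sum fun i _ => h2 i m
      _ = (t.card : ℝ) * ((t.card : ℝ) * κ) := by
          rw [Finset.sum_const, nsmul_eq_mul]
      _ = 4 * (n:ℝ) ^ 2 * κ := by rw [hcardt]; ring
  have hc8 : 2 * c ^ 2 * (4 * (n:ℝ) ^ 2 * κ) = 8 * κ / (n:ℝ) ^ 2 := by
    rw [hc]
    field_simp
    ring
  calc ∫ ω, Z n m ω ^ 2
      ≤ 2 * (∫ ω, A ω ^ 2) + 2 * c ^ 2 * ∫ ω, S ω ^ 2 := by rw [← heq]; exact hmain
    _ ≤ 2 * (κ / (n:ℝ) ^ 2) + 2 * c ^ 2 * (4 * (n:ℝ) ^ 2 * κ) := by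
        refine add_le_add (by linarith [hAbound]) ?_
        exact mul_le_mul_of_nonneg_left hSbound (by positivity)
    _ = 10 * κ / (n:ℝ) ^ 2 := by rw [hc8]; ring
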